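/- Let N ≥ 1 be odd and k = 3N. Define D_k on vertices {0,...,k-1} with (u,v) an edge iff the cycle-distance of u and v in C_k is odd and at most N. Then the map h_k: {0,...,k-1} → {0,1,2} defined by h_k(x) = 0 if (x < N and x even) or (x > 2N and x odd); h_k(x) = 1 if x < 2N and x odd; h_k(x) = 2 if x > N and x even, is a graph homomorphism from D_k to K_3 (i.e., a proper 3-colouring of D_k). -/
import Mathlib


/-- The distance between two vertices of the cycle `C_k`. -/
def cdist (k : ℕ) (u v : ZMod k) : ℕ := min (u - v).val (v - u).val

/-- Adjacency in the auxiliary graph `D_k`: `u` and `v` are adjacent iff their distance in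
the cycle `C_k` is odd and at most `N`. -/
def DAdj (k N : ℕ) (u v : ZMod k) : Prop := Odd (cdist k u v) ∧ cdist k u v ≤ N

/-- The colouring `h_k : {0,…,k-1} → {0,1,2}`: `0` if (`x < N` and `x` even) or
(`x > 2N` and `x` odd); `1` if `x < 2N` and `x` odd; `2` if `x > N` and `x` even. -/
def hcol (N k : ℕ) (x : ZMod k) : Fin 3 :=
  if (x.val < N ∧ Even x.val) ∨ (2 * N < x.val ∧ Odd x.val) then 0
  else if x.val < 2 * N ∧ Odd x.val then 1
  else 2

/-- For odd `N` and `k = 3N`, the map `h_k` is a graph homomorphism from `D_k` to `K_3`,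
i.e. a proper 3-colouring of `D_k`. -/
theorem hcol_is_colouring (N : ℕ) (hNodd : Odd N) :
    ∀ u v : ZMod (3 * N), DAdj (3 * N) N u v → hcol N (3 * N) u ≠ hcol N (3 * N) v := by
  have hN1 : 1 ≤ N := hNodd.pos
  haveI : NeZero (3 * N) := ⟨by omega⟩
  suffices H : ∀ u v : ZMod (3 * N), v.val ≤ u.val → DAdj (3 * N) N u v →
      hcol N (3 * N) u ≠ hcol N (3 * N) v by
    intro u v hadj
    rcases le_total v.val u.val with h | h
    · exact H u v h hadj
    · have hadj' : DAdj (3 * N) N v u := by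
        unfold DAdj cdist at *
        rwa [min_comm]
      exact (H v u h hadj').symm
  rintro u v hle ⟨hodd, hbound⟩
  have hne : u ≠ v := by
    rintro rfl
    simp [cdist] at hodd
  haveI : NeZero (u - v) := ⟨sub_ne_zero.mpr hne⟩
  have hsub : (u - v).val = u.val - v.val := ZMod.val_sub hle
  have hsub' : (v - u).val = 3 * N - (u.val - v.val) := by
    have h1 : v - u = -(u - v) := by ring
    rw [h1, ZMod.val_neg_of_ne_zero, hsub]
  have hc : cdist (3 * N) u v = min (u.val - v.val) (3 * N - (u.val - v.val)) := by
    rw [cdist, hsub, hsub']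
  rw [hc] at hodd hbound
  have ha : u.val < 3 * N := ZMod.val_lt u
  have hb : v.val < 3 * N := ZMod.val_lt v
  rw [Nat.odd_iff] at hodd hNodd
  unfold hcol
  simp only [Nat.even_iff, Nat.odd_iff]
  split_ifs <;> first | decide | omega
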